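/- arXiv:1605.04963 — 3 statements merged into one kernel-verified Lean document; each statement's English description precedes it below -/
import Mathlib

section
/- Define recursively γ_{n,j}(φ) for j ∈ {1,2} by γ_{0,j} = η_{0,j} and γ_{n,j}(φ) = γ_{n-1,j}(G_{n-1} · M_{n,j}(φ)), where c^{-1} < G_p < c. Suppose for all n and all bounded φ: ‖η_{n,1} - η_{n,2}‖_TV ≤ h (with η_{n,j} the normalization of γ_{n,j}). Then |γ_{n,1}(1) - γ_{n,2}(1)| ≤ C(n)·h for a constant C(n) depending only on n and c. -/
open MeasureTheory ProbabilityTheory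
open Set

/-- The unnormalized Feynman–Kac measures: `γ_0 = η_0` and
`γ_{n+1}(dy) = ∫ G_n(x) γ_n(dx) M_{n+1}(x, dy)`. -/
noncomputable def gammaFK {U : Type*} [MeasurableSpace U] (η0 : Measure U)
    (G : ℕ → U → ℝ) (M : ℕ → Kernel U U) : ℕ → Measure U
  | 0 => η0
  | n + 1 => ((gammaFK η0 G M n).withDensity fun x => ENNReal.ofReal (G n x)).bind
      (M (n + 1))

lemma tvIntLe {U : Type} [MeasurableSpace U] (ν1 ν2 : Measure U)
    [IsProbabilityMeasure ν1] [IsProbabilityMeasure ν2]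
    (G : U → ℝ) (hG : Measurable G) (c h : ℝ) (hc : 0 < c) (hh : 0 ≤ h)
    (hG0 : ∀ x, 0 ≤ G x) (hGc : ∀ x, G x ≤ c)
    (hTV : ∀ A : Set U, MeasurableSet A → |(ν1 A).toReal - (ν2 A).toReal| ≤ h) :
    |(∫⁻ x, ENNReal.ofReal (G x) ∂ν1).toReal - (∫⁻ x, ENNReal.ofReal (G x) ∂ν2).toReal|
      ≤ c * h := by
  have hmble : ∀ ν : Measure U, Measurable (fun t : ℝ => ν {a | t < G a}) := by
    intro ν
    exact Antitone.measurable (fun _ _ hst ↦ measure_mono (fun _ hh ↦ lt_of_le_of_lt hst hh))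
  have key : ∀ ν : Measure U, IsProbabilityMeasure ν →
      (∫⁻ x, ENNReal.ofReal (G x) ∂ν).toReal
        = ∫ t in Ioc 0 c, (ν {a | t < G a}).toReal := by
    intro ν hν
    rw [lintegral_eq_lintegral_meas_lt ν (Filter.Eventually.of_forall hG0) hG.aemeasurable]
    have hsplit : ∫⁻ t in Ioi (0:ℝ), ν {a | t < G a}
        = ∫⁻ t in Ioc 0 c, ν {a | t < G a} := by
      rw [← Ioc_union_Ioi_eq_Ioi hc.le,
        lintegral_union measurableSet_Ioi Ioc_disjoint_Ioi_same]
      have h0 : ∫⁻ t in Ioi c, ν {a | t < G a} = 0 := by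
        rw [setLIntegral_eq_zero_iff measurableSet_Ioi (hmble ν)]
        filter_upwards with t
        intro ht
        simp only [Set.mem_Ioi] at ht
        convert measure_empty (μ := ν)
        ext a; simp only [Set.mem_setOf_eq, Set.mem_empty_iff_false, iff_false, not_lt]
        exact (hGc a).trans ht.le
      rw [h0, add_zero]
    rw [hsplit, ← integral_toReal ((hmble ν).aemeasurable.restrict)]
    filter_upwards with t; exact measure_lt_top ν _
  have hint : ∀ ν : Measure U, IsProbabilityMeasure ν →
      IntegrableOn (fun t => (ν {a | t < G a}).toReal) (Ioc 0 c) := by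
    intro ν hν
    apply Integrable.mono' (g := fun _ => (1:ℝ))
      (integrableOn_const measure_Ioc_lt_top.ne)
      ((hmble ν).ennreal_toReal.aestronglyMeasurable.restrict)
    filter_upwards with t
    rw [Real.norm_eq_abs, abs_of_nonneg ENNReal.toReal_nonneg]
    exact ENNReal.toReal_le_of_le_ofReal zero_le_one (by simpa using prob_le_one)
  rw [key ν1 ‹_›, key ν2 ‹_›, ← integral_sub (hint ν1 ‹_›) (hint ν2 ‹_›)]
  calc |∫ t in Ioc 0 c, ((ν1 {a | t < G a}).toReal - (ν2 {a | t < G a}).toReal)|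
      ≤ h * ((volume.restrict (Ioc 0 c)) univ).toReal := by
        haveI : Fact ((volume : Measure ℝ) (Ioc 0 c) < ⊤) := ⟨measure_Ioc_lt_top⟩
        rw [← Real.norm_eq_abs]
        apply norm_integral_le_of_norm_le_const
        filter_upwards with t
        rw [Real.norm_eq_abs]
        exact hTV _ (hG measurableSet_Ioi)
    _ ≤ c * h := by
        rw [Measure.restrict_apply_univ, Real.volume_Ioc]
        rw [ENNReal.toReal_ofReal (by linarith)]
        nlinarith

lemma gammaFK_succ_univ {U : Type} [MeasurableSpace U] (η0 : Measure U) (G : ℕ → U → ℝ)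
    (M : ℕ → Kernel U U) (n : ℕ) (hM : IsMarkovKernel (M (n+1))) :
    gammaFK η0 G M (n+1) univ = ∫⁻ x, ENNReal.ofReal (G n x) ∂(gammaFK η0 G M n) := by
  show (((gammaFK η0 G M n).withDensity fun x => ENNReal.ofReal (G n x)).bind (M (n+1))) univ = _
  rw [Measure.bind_apply MeasurableSet.univ (M (n+1)).measurable.aemeasurable]
  have h1 : ∀ a, (M (n+1)) a univ = 1 := fun a => measure_univ
  simp_rw [h1, lintegral_one]
  rw [withDensity_apply _ MeasurableSet.univ, Measure.restrict_univ]

lemma gammaFK_univ_bounds {U : Type} [MeasurableSpace U] (η0 : Measure U)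
    [IsProbabilityMeasure η0] (c : ℝ) (hc : 1 < c) (G : ℕ → U → ℝ)
    (hGb : ∀ p x, c⁻¹ < G p x ∧ G p x < c)
    (M : ℕ → Kernel U U) (hM : ∀ p, IsMarkovKernel (M p)) (n : ℕ) :
    ENNReal.ofReal (c⁻¹ ^ n) ≤ gammaFK η0 G M n univ ∧
      gammaFK η0 G M n univ ≤ ENNReal.ofReal (c ^ n) := by
  induction n with
  | zero => simp [gammaFK]
  | succ n ih =>
    rw [gammaFK_succ_univ η0 G M n (hM (n+1))]
    constructor
    · calc ENNReal.ofReal (c⁻¹ ^ (n+1)) = ENNReal.ofReal c⁻¹ * ENNReal.ofReal (c⁻¹ ^ n) := by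
            rw [pow_succ, mul_comm, ENNReal.ofReal_mul (by positivity)]
        _ ≤ ENNReal.ofReal c⁻¹ * gammaFK η0 G M n univ :=
            mul_le_mul_right ih.1 _
        _ = ∫⁻ _, ENNReal.ofReal c⁻¹ ∂(gammaFK η0 G M n) := by rw [lintegral_const, mul_comm]
        _ ≤ _ := lintegral_mono fun x => ENNReal.ofReal_le_ofReal (hGb n x).1.le
    · calc ∫⁻ x, ENNReal.ofReal (G n x) ∂(gammaFK η0 G M n)
          ≤ ∫⁻ _, ENNReal.ofReal c ∂(gammaFK η0 G M n) :=
            lintegral_mono fun x => ENNReal.ofReal_le_ofReal (hGb n x).2.le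
        _ = ENNReal.ofReal c * gammaFK η0 G M n univ := by rw [lintegral_const, mul_comm]
        _ ≤ ENNReal.ofReal c * ENNReal.ofReal (c ^ n) := mul_le_mul_right ih.2 _
        _ = ENNReal.ofReal (c ^ (n+1)) := by
            rw [pow_succ, mul_comm (c^n), ENNReal.ofReal_mul (by positivity)]

lemma mass_decomp {U : Type} [MeasurableSpace U] (μ : Measure U) (g : U → ℝ)
    (h0 : μ univ ≠ 0) (htop : μ univ ≠ ⊤) :
    (∫⁻ x, ENNReal.ofReal (g x) ∂μ).toReal
      = (μ univ).toReal * (∫⁻ x, ENNReal.ofReal (g x) ∂((μ univ)⁻¹ • μ)).toReal := by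
  rw [lintegral_smul_measure, smul_eq_mul, ENNReal.toReal_mul, ENNReal.toReal_inv, ← mul_assoc,
    mul_inv_cancel₀ (by simp [ENNReal.toReal_ne_zero, h0, htop]), one_mul]

/-- Proposition A.4: if the normalized Feynman–Kac measures at two discretization
levels are within `h` in total variation at every time, and `c⁻¹ < G_p < c`, then the
normalizing constants satisfy `|γ_{n,1}(1) - γ_{n,2}(1)| ≤ C(n) h`, for a constant
`C(n)` depending only on `n` and `c`. -/
theorem stmt14 (n : ℕ) (c : ℝ) (hc : 1 < c) :
    ∃ C : ℝ, ∀ (U : Type) (_ : MeasurableSpace U)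
      (η0 : Fin 2 → Measure U) (_ : ∀ j, IsProbabilityMeasure (η0 j))
      (G : ℕ → U → ℝ) (_ : ∀ p, Measurable (G p))
      (_ : ∀ p x, c⁻¹ < G p x ∧ G p x < c)
      (M : ℕ → Fin 2 → Kernel U U) (_ : ∀ p j, IsMarkovKernel (M p j))
      (h : ℝ) (_ : 0 ≤ h)
      (_ : ∀ (m : ℕ) (A : Set U), MeasurableSet A →
        |((gammaFK (η0 0) G (fun p => M p 0) m A).toReal /
            (gammaFK (η0 0) G (fun p => M p 0) m Set.univ).toReal) -
          ((gammaFK (η0 1) G (fun p => M p 1) m A).toReal /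
            (gammaFK (η0 1) G (fun p => M p 1) m Set.univ).toReal)| ≤ h),
      |(gammaFK (η0 0) G (fun p => M p 0) n Set.univ).toReal -
        (gammaFK (η0 1) G (fun p => M p 1) n Set.univ).toReal| ≤ C * h := by
  refine ⟨n * c ^ (n+1), ?_⟩
  intro U mU η0 hη0 G hGm hGb M hM h hh hTV
  haveI := hη0 0; haveI := hη0 1
  induction n with
  | zero =>
    simp [gammaFK, measure_univ]
  | succ n ih =>
    set γ1 := gammaFK (η0 0) G (fun p => M p 0) with hγ1
    set γ2 := gammaFK (η0 1) G (fun p => M p 1) with hγ2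
    obtain ⟨hlo1, hhi1⟩ := gammaFK_univ_bounds (η0 0) c hc G hGb _ (fun p => hM p 0) n
    obtain ⟨hlo2, hhi2⟩ := gammaFK_univ_bounds (η0 1) c hc G hGb _ (fun p => hM p 1) n
    have hc0 : (0:ℝ) < c := by linarith
    have hne1 : γ1 n univ ≠ 0 :=
      fun hz => by simp [show gammaFK (η0 0) G (fun p => M p 0) n univ = 0 from hz, ENNReal.ofReal_eq_zero] at hlo1; nlinarith [pow_pos hc0 n, inv_pos.2 (pow_pos hc0 n)]
    have hne2 : γ2 n univ ≠ 0 :=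
      fun hz => by simp [show gammaFK (η0 1) G (fun p => M p 1) n univ = 0 from hz, ENNReal.ofReal_eq_zero] at hlo2; nlinarith [pow_pos hc0 n, inv_pos.2 (pow_pos hc0 n)]
    have htop1 : γ1 n univ ≠ ⊤ := ne_top_of_le_ne_top ENNReal.ofReal_ne_top hhi1
    have htop2 : γ2 n univ ≠ ⊤ := ne_top_of_le_ne_top ENNReal.ofReal_ne_top hhi2
    set ν1 : Measure U := (γ1 n univ)⁻¹ • γ1 n with hν1
    set ν2 : Measure U := (γ2 n univ)⁻¹ • γ2 n with hν2
    haveI hp1 : IsProbabilityMeasure ν1 :=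
      ⟨by rw [hν1, Measure.smul_apply, smul_eq_mul, ENNReal.inv_mul_cancel hne1 htop1]⟩
    haveI hp2 : IsProbabilityMeasure ν2 :=
      ⟨by rw [hν2, Measure.smul_apply, smul_eq_mul, ENNReal.inv_mul_cancel hne2 htop2]⟩
    have hνtoReal : ∀ (γ : Measure U) (hne : γ univ ≠ 0) (htop : γ univ ≠ ⊤) (A : Set U),
        (((γ univ)⁻¹ • γ) A).toReal = (γ A).toReal / (γ univ).toReal := by
      intro γ hne htop A
      rw [Measure.smul_apply, smul_eq_mul, ENNReal.toReal_mul, ENNReal.toReal_inv,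
        div_eq_inv_mul]
    have hTV' : ∀ A : Set U, MeasurableSet A → |(ν1 A).toReal - (ν2 A).toReal| ≤ h := by
      intro A hA
      rw [hν1, hν2, hνtoReal _ hne1 htop1, hνtoReal _ hne2 htop2]
      exact hTV n A hA
    have hkey := tvIntLe ν1 ν2 (G n) (hGm n) c h hc0 hh
      (fun x => le_of_lt (lt_trans (by positivity) (hGb n x).1))
      (fun x => (hGb n x).2.le) hTV'
    -- masses
    set a1 := (γ1 n univ).toReal with ha1def
    set a2 := (γ2 n univ).toReal with ha2def
    set I1 := (∫⁻ x, ENNReal.ofReal (G n x) ∂ν1).toReal with hI1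
    set I2 := (∫⁻ x, ENNReal.ofReal (G n x) ∂ν2).toReal with hI2
    have hdec1 : (γ1 (n+1) univ).toReal = a1 * I1 := by
      rw [hγ1, gammaFK_succ_univ _ _ _ n (hM (n+1) 0)]
      exact mass_decomp _ _ hne1 htop1
    have hdec2 : (γ2 (n+1) univ).toReal = a2 * I2 := by
      rw [hγ2, gammaFK_succ_univ _ _ _ n (hM (n+1) 1)]
      exact mass_decomp _ _ hne2 htop2
    have ha1nn : 0 ≤ a1 := ENNReal.toReal_nonneg
    have ha1le : a1 ≤ c ^ n := ENNReal.toReal_le_of_le_ofReal (by positivity) hhi1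
    have hI2nn : 0 ≤ I2 := ENNReal.toReal_nonneg
    have hI2le : I2 ≤ c := by
      rw [hI2]
      refine ENNReal.toReal_le_of_le_ofReal hc0.le ?_
      calc ∫⁻ x, ENNReal.ofReal (G n x) ∂ν2
          ≤ ∫⁻ _, ENNReal.ofReal c ∂ν2 :=
            lintegral_mono fun x => ENNReal.ofReal_le_ofReal (hGb n x).2.le
        _ = ENNReal.ofReal c := by rw [lintegral_const, measure_univ, mul_one]
    have hcn1 : (1:ℝ) ≤ c ^ n := one_le_pow₀ hc.le
    rw [hdec1, hdec2]
    have hsplit : a1 * I1 - a2 * I2 = a1 * (I1 - I2) + I2 * (a1 - a2) := by ring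
    rw [hsplit]
    calc |a1 * (I1 - I2) + I2 * (a1 - a2)|
        ≤ |a1 * (I1 - I2)| + |I2 * (a1 - a2)| := abs_add_le _ _
      _ = a1 * |I1 - I2| + I2 * |a1 - a2| := by
          rw [abs_mul, abs_mul, abs_of_nonneg ha1nn, abs_of_nonneg hI2nn]
      _ ≤ c ^ n * (c * h) + c * (n * c ^ (n+1) * h) := by
          have h1 : a1 * |I1 - I2| ≤ c ^ n * (c * h) :=
            mul_le_mul ha1le hkey (abs_nonneg _) (by positivity)
          have h2 : I2 * |a1 - a2| ≤ c * (n * c ^ (n+1) * h) :=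
            mul_le_mul hI2le ih (abs_nonneg _) hc0.le
          linarith
      _ ≤ (n + 1 : ℕ) * c ^ (n + 1 + 1) * h := by
          push_cast
          have e1 : c ^ (n+1) = c ^ n * c := pow_succ c n
          have e2 : c ^ (n+1+1) = c ^ n * c * c := by rw [pow_succ, e1]
          rw [e1, e2]
          nlinarith [mul_nonneg (mul_nonneg (pow_nonneg hc0.le n) hc0.le) hh,
            Nat.cast_nonneg (α := ℝ) n]
end

section
/- Suppose for levels l = 0,...,L the variance of the level-l increment is V_l/N_l with V_l = v·2^{-βl}, the per-sample cost is C_l = c·2^{γl}, and β = γ. Then the choice N_l = N_0·2^{-(β+γ)l/2} minimizing total cost Σ_l C_l N_l subject to total variance Σ_l V_l/N_l ≤ ε² gives total variance (v/N_0)·(L+1) and total cost c·N_0·(L+1); in particular with N_0 = v(L+1)/ε², the total cost is c·v·(L+1)²/ε². -/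
open Finset

/-- MLMC cost calculation in the boundary case `β = γ`: with `V_l = v 2^{-βl}`,
`C_l = c 2^{γl}` and `N_l = N_0 2^{-(β+γ)l/2}`, the total variance is
`(v/N_0)(L+1)`, the total cost is `c N_0 (L+1)`, and choosing
`N_0 = v(L+1)/ε²` gives total cost `c v (L+1)²/ε²`. -/
theorem stmt15 (v c N0 ε : ℝ) (hv : 0 < v) (hcp : 0 < c) (hN0 : 0 < N0) (hε : 0 < ε)
    (β γ : ℝ) (hβγ : β = γ) (L : ℕ)
    (V C N : ℕ → ℝ)
    (hV : ∀ l, V l = v * (2 : ℝ) ^ (-(β * l)))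
    (hC : ∀ l, C l = c * (2 : ℝ) ^ (γ * l))
    (hNl : ∀ l, N l = N0 * (2 : ℝ) ^ (-((β + γ) * l) / 2)) :
    (∑ l ∈ range (L + 1), V l / N l) = (v / N0) * (L + 1) ∧
    (∑ l ∈ range (L + 1), C l * N l) = c * N0 * (L + 1) ∧
    (N0 = v * (L + 1) / ε ^ 2 →
      (∑ l ∈ range (L + 1), C l * N l) = c * v * (L + 1) ^ 2 / ε ^ 2) := by
  subst hβγ
  have hpow : ∀ l : ℕ, (0:ℝ) < (2 : ℝ) ^ (-(β * l)) := fun l =>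
    Real.rpow_pos_of_pos (by norm_num) _
  have hN : ∀ l : ℕ, N l = N0 * (2 : ℝ) ^ (-(β * l)) := by
    intro l
    rw [hNl l]
    congr 1
    ring_nf
  have h1 : ∀ l ∈ range (L + 1), V l / N l = v / N0 := by
    intro l _
    rw [hV l, hN l]
    field_simp
  have h2 : ∀ l ∈ range (L + 1), C l * N l = c * N0 := by
    intro l _
    rw [hC l, hN l]
    have : (2:ℝ) ^ (β * l) * (2:ℝ) ^ (-(β * l)) = 1 := by
      rw [← Real.rpow_add (by norm_num)]; simp
    calc c * (2:ℝ) ^ (β * l) * (N0 * (2:ℝ) ^ (-(β * l)))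
        = c * N0 * ((2:ℝ) ^ (β * l) * (2:ℝ) ^ (-(β * l))) := by ring
      _ = c * N0 := by rw [this]; ring
  rw [Finset.sum_congr rfl h1, Finset.sum_congr rfl h2, Finset.sum_const,
    Finset.sum_const]
  simp only [card_range, nsmul_eq_mul]
  refine ⟨by push_cast; ring, by push_cast; ring, ?_⟩
  intro hN0eq
  rw [hN0eq]
  push_cast
  field_simp
end

section
/- Let L = ⌈log₂(1/ε)⌉ and set N_l = ⌈C·ε^{-2}·2^{-3l/4}·K_L⌉ with K_L = Σ_{l=0}^{L} 2^{l/4}. If the level-l variance contribution is bounded by B·2^{-l/2}/N_l and per-time-step cost of level l is 2^l·N_l, then the total variance Σ_{l=0}^{L} B·2^{-l/2}/N_l is O(ε²) and the total cost Σ_{l=0}^{L} 2^l N_l is O(ε^{-5/2}). -/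
open Finset

set_option maxHeartbeats 1000000 in
/-- MLPF cost analysis: with `L = ⌈log₂(1/ε)⌉`, `K_L = Σ_{l≤L} 2^{l/4}` and
`N_l = ⌈C ε⁻² 2^{-3l/4} K_L⌉`, if the level-`l` variance contribution is bounded by
`B 2^{-l/2}/N_l` and the cost of level `l` is `2^l N_l`, then the total variance is
`O(ε²)` and the total cost is `O(ε^{-5/2})`. -/
theorem stmt16 (C B : ℝ) (hC : 0 < C) (hB : 0 < B) :
    ∃ D : ℝ, 0 < D ∧ ∀ ε : ℝ, 0 < ε → ε < 1 →
      (∑ l ∈ range ((⌈Real.logb 2 (1 / ε)⌉.toNat) + 1),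
          B * (2 : ℝ) ^ (-(l : ℝ) / 2) /
            (⌈C * ε⁻¹ ^ (2 : ℕ) * (2 : ℝ) ^ (-(3 * (l : ℝ)) / 4) *
              (∑ k ∈ range ((⌈Real.logb 2 (1 / ε)⌉.toNat) + 1),
                (2 : ℝ) ^ ((k : ℝ) / 4))⌉₊ : ℝ))
        ≤ D * ε ^ 2 ∧
      (∑ l ∈ range ((⌈Real.logb 2 (1 / ε)⌉.toNat) + 1),
          (2 : ℝ) ^ l *
            (⌈C * ε⁻¹ ^ (2 : ℕ) * (2 : ℝ) ^ (-(3 * (l : ℝ)) / 4) *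
              (∑ k ∈ range ((⌈Real.logb 2 (1 / ε)⌉.toNat) + 1),
                (2 : ℝ) ^ ((k : ℝ) / 4))⌉₊ : ℝ))
        ≤ D * ε ^ (-(5 : ℝ) / 2) := by
  have hr0 : (0:ℝ) < (2:ℝ) ^ ((1:ℝ)/4) := Real.rpow_pos_of_pos two_pos _
  have hr1 : (1:ℝ) < (2:ℝ) ^ ((1:ℝ)/4) := by
    have : (1:ℝ) = (2:ℝ) ^ (0:ℝ) := by simp
    rw [this]
    exact Real.rpow_lt_rpow_left_iff one_lt_two |>.mpr (by norm_num)
  set r : ℝ := (2:ℝ) ^ ((1:ℝ)/4) with hr_def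
  have hrsub : 0 < r - 1 := sub_pos.mpr hr1
  have hD : 0 < B/C + 2*C/(r-1)^2 + 4 := by
    have h2 : 0 < (r-1)^2 := pow_pos hrsub 2
    have h3 : 0 < 2*C/(r-1)^2 := div_pos (by linarith) h2
    have h4 : 0 < B/C := div_pos hB hC
    linarith
  refine ⟨B/C + 2*C/(r-1)^2 + 4, hD, ?_⟩
  intro ε hε hε1
  set L : ℕ := (⌈Real.logb 2 (1 / ε)⌉).toNat with hLdef
  set K : ℝ := ∑ k ∈ range (L+1), (2:ℝ)^((k:ℝ)/4) with hKdef
  have hterm : ∀ k : ℕ, (2:ℝ)^((k:ℝ)/4) = r ^ k := by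
    intro k
    rw [hr_def, ← Real.rpow_natCast ((2:ℝ)^((1:ℝ)/4)) k, ← Real.rpow_mul (by norm_num)]
    congr 1; ring
  have hKpos : 0 < K := by
    rw [hKdef]
    exact Finset.sum_pos (fun k _ => Real.rpow_pos_of_pos two_pos _)
      (nonempty_range_iff.mpr (Nat.succ_ne_zero L))
  have hεinv : 0 < ε⁻¹ ^ (2:ℕ) := pow_pos (inv_pos.mpr hε) 2
  have hx : ∀ l : ℕ, 0 < C * ε⁻¹ ^ (2:ℕ) * (2:ℝ)^(-(3*(l:ℝ))/4) * K :=
    fun l => mul_pos (mul_pos (mul_pos hC hεinv) (Real.rpow_pos_of_pos two_pos _)) hKpos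
  have hceilpos : ∀ l : ℕ,
      (0:ℝ) < (⌈C * ε⁻¹ ^ (2:ℕ) * (2:ℝ)^(-(3*(l:ℝ))/4) * K⌉₊ : ℝ) :=
    fun l => lt_of_lt_of_le (hx l) (Nat.le_ceil _)
  -- bound on L
  have hlogb : 0 ≤ Real.logb 2 (1/ε) := by
    apply Real.logb_nonneg one_lt_two
    rw [le_div_iff₀ hε]; linarith
  have hLcast : ((L:ℕ):ℝ) = ((⌈Real.logb 2 (1/ε)⌉ : ℤ) : ℝ) := by
    rw [hLdef]
    exact_mod_cast congrArg (fun z : ℤ => (z:ℝ)) (Int.toNat_of_nonneg (Int.ceil_nonneg hlogb))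
  have hLle : (L:ℝ) ≤ Real.logb 2 (1/ε) + 1 := by
    rw [hLcast]
    exact_mod_cast (Int.ceil_lt_add_one _).le
  have h2L : (2:ℝ)^((L:ℝ)+1) ≤ 4/ε := by
    have h1 : (2:ℝ)^((L:ℝ)+1) ≤ (2:ℝ)^(Real.logb 2 (1/ε) + 2) :=
      Real.rpow_le_rpow_left_iff one_lt_two |>.mpr (by linarith)
    have h2 : (2:ℝ)^(Real.logb 2 (1/ε) + 2) = 4/ε := by
      rw [Real.rpow_add two_pos, Real.rpow_logb two_pos (by norm_num) (by positivity)]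
      have : (2:ℝ)^(2:ℝ) = 4 := by
        rw [show (2:ℝ) = ((2:ℕ):ℝ) by norm_num]
        rw [Real.rpow_natCast]; norm_num
      rw [this]; ring
    linarith
  -- bound on K
  have hKgeomEq : K = (r^(L+1) - 1)/(r - 1) := by
    rw [hKdef, Finset.sum_congr rfl (fun k _ => hterm k), geom_sum_eq hr1.ne']
  have hrpow : r^(L+1) ≤ (4/ε)^((1:ℝ)/4) := by
    have h1 : r^(L+1) = ((2:ℝ)^((L:ℝ)+1))^((1:ℝ)/4) := by
      rw [hr_def, ← Real.rpow_natCast ((2:ℝ)^((1:ℝ)/4)) (L+1),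
        ← Real.rpow_mul (by norm_num : (0:ℝ) ≤ 2),
        ← Real.rpow_mul (by norm_num : (0:ℝ) ≤ 2)]
      congr 1; push_cast; ring
    rw [h1]
    exact Real.rpow_le_rpow (by positivity) h2L (by norm_num)
  have hKle : K ≤ (4/ε)^((1:ℝ)/4) / (r - 1) := by
    rw [hKgeomEq]
    gcongr
    · linarith
  have hKsq : K^2 ≤ 2 * ε^(-(1:ℝ)/2) / (r-1)^2 := by
    have h1 : K^2 ≤ ((4/ε)^((1:ℝ)/4) / (r - 1))^2 :=
      pow_le_pow_left₀ hKpos.le hKle 2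
    have h2 : ((4/ε)^((1:ℝ)/4) / (r - 1))^2 = 2 * ε^(-(1:ℝ)/2) / (r-1)^2 := by
      rw [div_pow]
      congr 1
      rw [sq, ← Real.rpow_add (by positivity)]
      norm_num
      rw [Real.div_rpow (by norm_num) hε.le]
      have h4 : (4:ℝ)^((1:ℝ)/2) = 2 := by
        rw [show (4:ℝ) = (2:ℝ)^(2:ℕ) by norm_num, ← Real.rpow_natCast (2:ℝ) 2,
          ← Real.rpow_mul (by norm_num : (0:ℝ) ≤ 2)]
        norm_num
      rw [h4, Real.rpow_neg hε.le]
      norm_num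
      rw [div_eq_mul_inv]
    linarith
  constructor
  · -- variance bound
    have hstep : ∀ l ∈ range (L+1),
        B * (2:ℝ)^(-(l:ℝ)/2) / (⌈C * ε⁻¹ ^ (2:ℕ) * (2:ℝ)^(-(3*(l:ℝ))/4) * K⌉₊ : ℝ)
          ≤ B/(C*K) * ε^2 * (2:ℝ)^((l:ℝ)/4) := by
      intro l _
      have h1 : B * (2:ℝ)^(-(l:ℝ)/2) / (⌈C * ε⁻¹ ^ (2:ℕ) * (2:ℝ)^(-(3*(l:ℝ))/4) * K⌉₊ : ℝ)
          ≤ B * (2:ℝ)^(-(l:ℝ)/2) / (C * ε⁻¹ ^ (2:ℕ) * (2:ℝ)^(-(3*(l:ℝ))/4) * K) := by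
        gcongr
        exact Nat.le_ceil _
      have h2 : B * (2:ℝ)^(-(l:ℝ)/2) / (C * ε⁻¹ ^ (2:ℕ) * (2:ℝ)^(-(3*(l:ℝ))/4) * K)
          = B/(C*K) * ε^2 * (2:ℝ)^((l:ℝ)/4) := by
        have e1 : (2:ℝ)^(-(l:ℝ)/2) = (2:ℝ)^((l:ℝ)/4) * (2:ℝ)^(-(3*(l:ℝ))/4) := by
          rw [← Real.rpow_add two_pos]; congr 1; ring
        have hne : (2:ℝ)^(-(3*(l:ℝ))/4) ≠ 0 := (Real.rpow_pos_of_pos two_pos _).ne'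
        rw [e1]
        field_simp
      linarith
    calc ∑ l ∈ range (L+1),
        B * (2:ℝ)^(-(l:ℝ)/2) / (⌈C * ε⁻¹ ^ (2:ℕ) * (2:ℝ)^(-(3*(l:ℝ))/4) * K⌉₊ : ℝ)
        ≤ ∑ l ∈ range (L+1), B/(C*K) * ε^2 * (2:ℝ)^((l:ℝ)/4) :=
          Finset.sum_le_sum hstep
      _ = B/(C*K) * ε^2 * K := by rw [← Finset.mul_sum]
      _ = B/C * ε^2 := by field_simp
      _ ≤ (B/C + 2*C/(r-1)^2 + 4) * ε^2 := by
          have h2 : 0 < (r-1)^2 := pow_pos hrsub 2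
          have h3 : 0 < 2*C/(r-1)^2 := div_pos (by linarith) h2
          nlinarith [sq_nonneg ε]
  · -- cost bound
    have hstep : ∀ l ∈ range (L+1),
        (2:ℝ)^l * (⌈C * ε⁻¹ ^ (2:ℕ) * (2:ℝ)^(-(3*(l:ℝ))/4) * K⌉₊ : ℝ)
          ≤ C * ε⁻¹ ^ (2:ℕ) * K * (2:ℝ)^((l:ℝ)/4) + (2:ℝ)^l := by
      intro l _
      have hceil : (⌈C * ε⁻¹ ^ (2:ℕ) * (2:ℝ)^(-(3*(l:ℝ))/4) * K⌉₊ : ℝ)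
          ≤ C * ε⁻¹ ^ (2:ℕ) * (2:ℝ)^(-(3*(l:ℝ))/4) * K + 1 :=
        (Nat.ceil_lt_add_one (hx l).le).le
      have e2 : (2:ℝ)^l * (2:ℝ)^(-(3*(l:ℝ))/4) = (2:ℝ)^((l:ℝ)/4) := by
        rw [← Real.rpow_natCast (2:ℝ) l, ← Real.rpow_add two_pos]
        congr 1; ring
      calc (2:ℝ)^l * (⌈C * ε⁻¹ ^ (2:ℕ) * (2:ℝ)^(-(3*(l:ℝ))/4) * K⌉₊ : ℝ)
          ≤ (2:ℝ)^l * (C * ε⁻¹ ^ (2:ℕ) * (2:ℝ)^(-(3*(l:ℝ))/4) * K + 1) := by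
            apply mul_le_mul_of_nonneg_left hceil (by positivity)
        _ = C * ε⁻¹ ^ (2:ℕ) * K * (2:ℝ)^((l:ℝ)/4) + (2:ℝ)^l := by
            rw [← e2]; ring
    have hsum2 : ∑ l ∈ range (L+1), (2:ℝ)^l = 2^(L+1) - 1 := by
      rw [geom_sum_eq (by norm_num : (2:ℝ) ≠ 1)]
      norm_num
    have h2L' : ((2:ℝ))^(L+1) ≤ 4/ε := by
      have : ((2:ℝ))^(L+1) = (2:ℝ)^((L:ℝ)+1) := by
        rw [← Real.rpow_natCast (2:ℝ) (L+1)]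
        push_cast; ring_nf
      rw [this]; exact h2L
    have hfin : ε⁻¹ ^ (2:ℕ) * ε^(-(1:ℝ)/2) = ε^(-(5:ℝ)/2) := by
      have h1 : ε⁻¹ ^ (2:ℕ) = ε^(-(2:ℝ)) := by
        rw [Real.rpow_neg hε.le, show ((2:ℝ)) = ((2:ℕ):ℝ) by norm_num,
          Real.rpow_natCast, inv_pow]
      rw [h1, ← Real.rpow_add hε]
      norm_num
    have heps : ε^(-(1:ℝ)) ≤ ε^(-(5:ℝ)/2) :=
      Real.rpow_le_rpow_of_exponent_ge hε hε1.le (by norm_num)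
    have h4e : 4/ε ≤ 4 * ε^(-(5:ℝ)/2) := by
      have : 4/ε = 4 * ε^(-(1:ℝ)) := by
        rw [Real.rpow_neg_one]; ring
      rw [this]
      linarith [heps]
    calc ∑ l ∈ range (L+1),
        (2:ℝ)^l * (⌈C * ε⁻¹ ^ (2:ℕ) * (2:ℝ)^(-(3*(l:ℝ))/4) * K⌉₊ : ℝ)
        ≤ ∑ l ∈ range (L+1), (C * ε⁻¹ ^ (2:ℕ) * K * (2:ℝ)^((l:ℝ)/4) + (2:ℝ)^l) :=
          Finset.sum_le_sum hstep
      _ = C * ε⁻¹ ^ (2:ℕ) * K * K + (2^(L+1) - 1) := by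
          rw [Finset.sum_add_distrib, ← Finset.mul_sum, hsum2]
      _ ≤ C * ε⁻¹ ^ (2:ℕ) * (2 * ε^(-(1:ℝ)/2) / (r-1)^2) + 4/ε := by
          have h1 : C * ε⁻¹ ^ (2:ℕ) * K * K = C * ε⁻¹ ^ (2:ℕ) * K^2 := by ring
          rw [h1]
          have h2 : C * ε⁻¹ ^ (2:ℕ) * K^2 ≤ C * ε⁻¹ ^ (2:ℕ) * (2 * ε^(-(1:ℝ)/2) / (r-1)^2) := by
            apply mul_le_mul_of_nonneg_left hKsq (by positivity)
          linarith
      _ = (2*C/(r-1)^2) * ε^(-(5:ℝ)/2) + 4/ε := by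
          have h1 : C * ε⁻¹ ^ (2:ℕ) * (2 * ε^(-(1:ℝ)/2) / (r-1)^2)
              = (2*C/(r-1)^2) * (ε⁻¹ ^ (2:ℕ) * ε^(-(1:ℝ)/2)) := by ring
          rw [h1, hfin]
      _ ≤ (B/C + 2*C/(r-1)^2 + 4) * ε^(-(5:ℝ)/2) := by
          have h2 : 0 < (r-1)^2 := pow_pos hrsub 2
          have hBC : 0 < B/C := div_pos hB hC
          have hepspos : 0 < ε^(-(5:ℝ)/2) := Real.rpow_pos_of_pos hε _
          nlinarith [h4e]
end
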